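/- Let S be an n×n row-stochastic matrix whose eigenvalues are 1 = λ₁ > |λ₂| ≥ ... ≥ |λₙ| with λ₂,...,λₙ all of modulus strictly less than 1, and suppose S is diagonalizable. Then every eigenvalue of S* = (I_n - θθᵀ)S, where θ = 1_n/√n, has modulus strictly less than 1. -/

import Mathlib

open Matrix Polynomial

private lemma eval_charpoly'' {n : ℕ} (A : Matrix (Fin n) (Fin n) ℂ) (μ : ℂ) :
    A.charpoly.eval μ = (μ • (1 : Matrix (Fin n) (Fin n) ℂ) - A).det := by
  rw [Matrix.charpoly, ← Polynomial.coe_evalRingHom, RingHom.map_det]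
  congr 1
  ext i j
  by_cases h : i = j
  · subst h
    simp [charmatrix_apply_eq, Matrix.one_apply]
  · simp [charmatrix_apply_ne _ _ _ h, Matrix.one_apply, h]

/-- If a diagonalizable row-stochastic matrix has 1 as a simple eigenvalue and all other
eigenvalues of modulus < 1, then every eigenvalue of S* = (I - θθᵀ)S has modulus < 1. -/
theorem stmt6 {n : ℕ} (hn : 0 < n) (S : Matrix (Fin n) (Fin n) ℝ)
    (hpos : ∀ i j, 0 ≤ S i j) (hrow : ∀ i, ∑ j, S i j = 1)
    (hdiag : ∃ (P : Matrix (Fin n) (Fin n) ℂ) (d : Fin n → ℂ), IsUnit P.det ∧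
      S.map Complex.ofReal = P * Matrix.diagonal d * P⁻¹)
    (hsimple : (S.map Complex.ofReal).charpoly.rootMultiplicity 1 = 1)
    (hlt : ∀ μ : ℂ, (S.map Complex.ofReal).charpoly.IsRoot μ → μ ≠ 1 → ‖μ‖ < 1)
    (θ : Fin n → ℂ) (hθ : θ = fun _ => 1 / (Real.sqrt n : ℂ)) :
    ∀ μ : ℂ, ((1 - Matrix.vecMulVec θ θ) * S.map Complex.ofReal).charpoly.IsRoot μ →
      ‖μ‖ < 1 := by
  intro μ hμ
  set A := S.map Complex.ofReal with hA
  set p := A.charpoly with hp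
  set q := ((1 - Matrix.vecMulVec θ θ) * A).charpoly with hq
  have hsqrt : (Real.sqrt n : ℂ) ≠ 0 := by
    simp only [ne_eq, Complex.ofReal_eq_zero]
    positivity
  -- A has row sums 1, so θ is a fixed vector
  have hAθ : A *ᵥ θ = θ := by
    funext i
    have h1 : ∑ j, ((S i j : ℝ) : ℂ) = 1 := by exact_mod_cast hrow i
    simp only [mulVec, dotProduct, hθ, hA, Matrix.map_apply]
    rw [← Finset.sum_mul, h1, one_mul]
  have hθθ : θ ⬝ᵥ θ = 1 := by
    have h2 : ((Real.sqrt n : ℝ) : ℂ) * ((Real.sqrt n : ℝ) : ℂ) = (n : ℂ) := by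
      rw [← Complex.ofReal_mul, Real.mul_self_sqrt (Nat.cast_nonneg n)]
      norm_cast
    have hn' : (n : ℂ) ≠ 0 := by exact_mod_cast hn.ne'
    simp only [dotProduct, hθ, Finset.sum_const, Finset.card_univ, Fintype.card_fin,
      nsmul_eq_mul]
    rw [div_mul_div_comm, one_mul, h2, mul_one_div, div_self hn']
  have hvθ : (θ ᵥ* A) ⬝ᵥ θ = 1 := by
    rw [← dotProduct_mulVec, hAθ, hθθ]
  -- rewrite the perturbed matrix as a rank one update
  have hsplit : ∀ x : ℂ, x • (1 : Matrix (Fin n) (Fin n) ℂ) - (1 - Matrix.vecMulVec θ θ) * A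
      = (x • 1 - A) + Matrix.replicateCol Unit θ * Matrix.replicateRow Unit (θ ᵥ* A) := by
    intro x
    have hrr : Matrix.vecMulVec θ θ * A = Matrix.replicateCol Unit θ * Matrix.replicateRow Unit (θ ᵥ* A) := by
      rw [Matrix.vecMulVec_eq Unit, Matrix.mul_assoc, Matrix.replicateRow_vecMul]
    rw [Matrix.sub_mul, Matrix.one_mul, hrr]
    abel
  have hpne : p ≠ 0 := (Matrix.charpoly_monic A).ne_zero
  have hqne : q ≠ 0 := (Matrix.charpoly_monic _).ne_zero
  -- pointwise key identity at generic points
  have key : ∀ x : ℂ, x ≠ 1 → p.eval x ≠ 0 →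
      (x - 1) * q.eval x = x * p.eval x := by
    intro x hx1 hpx
    have hdetM : (x • (1 : Matrix (Fin n) (Fin n) ℂ) - A).det = p.eval x :=
      (eval_charpoly'' A x).symm
    have hu : IsUnit (x • (1 : Matrix (Fin n) (Fin n) ℂ) - A).det := by
      rw [hdetM]; exact hpx.isUnit
    rw [hq, eval_charpoly'', hsplit x, Matrix.det_add_replicateCol_mul_replicateRow hu]
    set M := x • (1 : Matrix (Fin n) (Fin n) ℂ) - A with hM
    have hMθ : M *ᵥ θ = (x - 1) • θ := by
      rw [hM, Matrix.sub_mulVec, hAθ, Matrix.smul_mulVec, Matrix.one_mulVec, sub_smul, one_smul]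
    have hMinvθ : M⁻¹ *ᵥ θ = (x - 1)⁻¹ • θ := by
      have h2 : M⁻¹ *ᵥ (M *ᵥ θ) = θ := by
        rw [Matrix.mulVec_mulVec, Matrix.nonsing_inv_mul M hu, Matrix.one_mulVec]
      rw [hMθ, Matrix.mulVec_smul] at h2
      calc M⁻¹ *ᵥ θ = (x - 1)⁻¹ • ((x - 1) • (M⁻¹ *ᵥ θ)) := by
            rw [smul_smul, inv_mul_cancel₀ (sub_ne_zero.mpr hx1), one_smul]
        _ = (x - 1)⁻¹ • θ := by rw [h2]
    have hdet1 : (1 + Matrix.replicateRow Unit (θ ᵥ* A) * M⁻¹ * Matrix.replicateCol Unit θ).det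
        = 1 + (x - 1)⁻¹ := by
      rw [Matrix.det_unique]
      have : Matrix.replicateRow Unit (θ ᵥ* A) * M⁻¹ * Matrix.replicateCol Unit θ
          = Matrix.replicateRow Unit (θ ᵥ* A) * Matrix.replicateCol Unit (M⁻¹ *ᵥ θ) := by
        rw [Matrix.replicateCol_mulVec, Matrix.mul_assoc]
      rw [this]
      simp only [Matrix.add_apply, Matrix.one_apply_eq, Matrix.replicateRow_mul_replicateCol_apply, hMinvθ,
        dotProduct_smul, hvθ, smul_eq_mul, mul_one]
    rw [hdet1, hdetM]
    have hx' : x - 1 ≠ 0 := sub_ne_zero.mpr hx1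
    field_simp
    ring
  -- upgrade to a polynomial identity
  have hpid : (X - 1) * q = X * p := by
    have hne : ((X : ℂ[X]) - 1) * p ≠ 0 := by
      apply mul_ne_zero _ hpne
      intro h
      have := congrArg (Polynomial.eval (0 : ℂ)) h
      simp at this
    have hzero : (X - 1) * q - X * p = 0 := by
      apply Polynomial.eq_zero_of_infinite_isRoot
      apply Set.Infinite.mono (s := {x : ℂ | ((X - 1) * p).IsRoot x}ᶜ)
      · intro x hx
        simp only [Set.mem_compl_iff, Set.mem_setOf_eq, IsRoot, eval_mul, eval_sub, eval_X,
          eval_one, mul_eq_zero, not_or] at hx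
        have hx1 : x ≠ 1 := fun h => hx.1 (by rw [h]; ring)
        have hpx : p.eval x ≠ 0 := hx.2
        simp only [Set.mem_setOf_eq, IsRoot, eval_sub, eval_mul, eval_X, eval_one]
        rw [key x hx1 hpx]
        ring
      · exact Set.Finite.infinite_compl (Polynomial.finite_setOf_isRoot hne)
    linear_combination hzero
  -- 1 is not a root of q
  have h1q : ¬ q.IsRoot 1 := by
    have hm := congrArg (Polynomial.rootMultiplicity (1 : ℂ)) hpid
    have hXne : ((X : ℂ[X]) - 1) ≠ 0 := by
      intro h
      have := congrArg (Polynomial.eval (0 : ℂ)) h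
      simp at this
    have hX0 : (X : ℂ[X]) ≠ 0 := Polynomial.X_ne_zero
    rw [Polynomial.rootMultiplicity_mul (mul_ne_zero hXne hqne),
      Polynomial.rootMultiplicity_mul (mul_ne_zero hX0 hpne)] at hm
    have e1 : Polynomial.rootMultiplicity (1 : ℂ) (X - 1) = 1 := by
      have := Polynomial.rootMultiplicity_X_sub_C_self (x := (1 : ℂ))
      simpa using this
    have e2 : Polynomial.rootMultiplicity (1 : ℂ) (X : ℂ[X]) = 0 :=
      Polynomial.rootMultiplicity_eq_zero (by simp [IsRoot])
    rw [e1, e2, hsimple] at hm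
    intro hroot
    have := (Polynomial.rootMultiplicity_pos hqne).mpr hroot
    omega
  -- conclude
  have hev : (μ - 1) * q.eval μ = μ * p.eval μ := by
    have := congrArg (Polynomial.eval μ) hpid
    simpa using this
  have hμ0 : q.eval μ = 0 := hμ
  have hzero : μ * p.eval μ = 0 := by rw [← hev, hμ0, mul_zero]
  rcases mul_eq_zero.mp hzero with h0 | hpμ
  · simp [h0]
  · have hμ1 : μ ≠ 1 := by rintro rfl; exact h1q hμ
    exact hlt μ hpμ hμ1
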